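/- Let (Δ,u) be a labeled polytope in ℝⁿ and b ∈ C*₊(Δ). Define Ψ_b(μ) = (1,μ)/b(μ) ∈ ℝ^{1+n} on the open set U = {μ ∈ ℝⁿ : b(μ) > 0}. Then Ψ_b is injective on U, the Fréchet derivative of Ψ_b at every point of U is an injective linear map ℝⁿ → ℝ^{1+n}, and {y ∈ C(Δ) : ⟨y,b⟩ = 1} = Ψ_b(Δ). -/

import Mathlib

open scoped RealInnerProductSpace
open MeasureTheory

noncomputable section

/-- A labeled polytope datum in `ℝⁿ`: `d` inward normals `u l` together with
constants `lam l`, giving defining affine functions `L l x = ⟪u l, x⟫ + lam l`. -/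
structure LabeledPolytope (n d : ℕ) where
  u : Fin d → EuclideanSpace ℝ (Fin n)
  lam : Fin d → ℝ

namespace LabeledPolytope

variable {n d : ℕ}

/-- The defining affine functions `L_l`. -/
def L (P : LabeledPolytope n d) (l : Fin d) (x : EuclideanSpace ℝ (Fin n)) : ℝ :=
  ⟪P.u l, x⟫ + P.lam l

/-- The polytope `Δ = {x | L_l x ≥ 0 ∀ l}`. -/
def Delta (P : LabeledPolytope n d) : Set (EuclideanSpace ℝ (Fin n)) :=
  {x | ∀ l, 0 ≤ P.L l x}

/-- The facet `F_l = Δ ∩ {L_l = 0}`. -/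
def Facet (P : LabeledPolytope n d) (l : Fin d) : Set (EuclideanSpace ℝ (Fin n)) :=
  {x | x ∈ P.Delta ∧ P.L l x = 0}

/-- `(Δ,u)` is a labeled polytope: `n ≥ 1`, `Δ` is a compact polytope with nonempty
interior, and each `F_l` is a nonempty facet of dimension `n - 1`. -/
structure IsLabeledPolytope (P : LabeledPolytope n d) : Prop where
  npos : 1 ≤ n
  compact : IsCompact P.Delta
  int_nonempty : (interior P.Delta).Nonempty
  facet_nonempty : ∀ l, (P.Facet l).Nonempty
  facet_dim : ∀ l, Module.finrank ℝ (affineSpan ℝ (P.Facet l)).direction = n - 1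

/-- The value of the affine function `b = (b₀, b′)` at `x`. -/
def bval (b : ℝ × EuclideanSpace ℝ (Fin n)) (x : EuclideanSpace ℝ (Fin n)) : ℝ :=
  b.1 + ⟪b.2, x⟫

/-- The pairing `⟨(y₀,y),(b₀,b′)⟩ = b₀ y₀ + ⟨b′, y⟩`. -/
def pairing (y b : ℝ × EuclideanSpace ℝ (Fin n)) : ℝ :=
  b.1 * y.1 + ⟪b.2, y.2⟫

/-- The cone `C(Δ) = {(y₀,y) | λ_l y₀ + ⟨u_l, y⟩ ≥ 0 ∀ l} ⊆ ℝ^{1+n}`. -/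
def Cone (P : LabeledPolytope n d) : Set (ℝ × EuclideanSpace ℝ (Fin n)) :=
  {y | ∀ l, 0 ≤ P.lam l * y.1 + ⟪P.u l, y.2⟫}

/-- The dual cone `C*(Δ)`. -/
def Cstar (P : LabeledPolytope n d) : Set (ℝ × EuclideanSpace ℝ (Fin n)) :=
  {b | ∀ y ∈ P.Cone, 0 ≤ pairing y b}

/-- `C*₊(Δ)`: affine functions strictly positive on `Δ`. -/
def CstarPlus (P : LabeledPolytope n d) : Set (ℝ × EuclideanSpace ℝ (Fin n)) :=
  {b | ∀ μ ∈ P.Delta, 0 < bval b μ}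

/-- The map `Ψ_b(μ) = (1,μ)/b(μ)`. -/
def Psi (b : ℝ × EuclideanSpace ℝ (Fin n)) (x : EuclideanSpace ℝ (Fin n)) :
    ℝ × EuclideanSpace ℝ (Fin n) :=
  (bval b x)⁻¹ • ((1 : ℝ), x)

/-- The boundary measure `σ_l`: `‖u_l‖⁻¹` times the `(n-1)`-dimensional Hausdorff
measure restricted to the facet `F_l`. -/
def facetMeasure (P : LabeledPolytope n d) (l : Fin d) :
    Measure (EuclideanSpace ℝ (Fin n)) :=
  (ENNReal.ofReal ‖P.u l‖⁻¹) • (μH[(n : ℝ) - 1]).restrict (P.Facet l)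

/-- `W₀₀(b) = ∫_Δ b(μ)^{-(n+1)} dμ`. -/
def W00 (P : LabeledPolytope n d) (b : ℝ × EuclideanSpace ℝ (Fin n)) : ℝ :=
  ∫ μ in P.Delta, (bval b μ ^ (n + 1))⁻¹

/-- `W_{i0}(b) = ∫_Δ μ_i b(μ)^{-(n+2)} dμ`. -/
def Wi0 (P : LabeledPolytope n d) (i : Fin n) (b : ℝ × EuclideanSpace ℝ (Fin n)) : ℝ :=
  ∫ μ in P.Delta, μ i * (bval b μ ^ (n + 2))⁻¹

/-- `Z₀(b) = 2 Σ_l ∫_{F_l} b(μ)^{-n} dσ_l`. -/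
def Z0 (P : LabeledPolytope n d) (b : ℝ × EuclideanSpace ℝ (Fin n)) : ℝ :=
  2 * ∑ l, ∫ μ, (bval b μ ^ n)⁻¹ ∂(P.facetMeasure l)

/-- `Z_i(b) = 2 Σ_l ∫_{F_l} μ_i b(μ)^{-(n+1)} dσ_l`. -/
def Zi (P : LabeledPolytope n d) (i : Fin n) (b : ℝ × EuclideanSpace ℝ (Fin n)) : ℝ :=
  2 * ∑ l, ∫ μ, μ i * (bval b μ ^ (n + 1))⁻¹ ∂(P.facetMeasure l)

/-- `Ω = {b ∈ C*₊(Δ) : b₀ = 1}`, viewed as an open subset of `ℝⁿ` via `b ↔ b′`. -/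
def Omega (P : LabeledPolytope n d) : Set (EuclideanSpace ℝ (Fin n)) :=
  {b' | ((1 : ℝ), b') ∈ P.CstarPlus}

/-- The functional `F(b) = Z₀(b)^{n+1} / W₀₀(b)ⁿ` as a function of `b′` (with `b₀ = 1`). -/
def Fcal (P : LabeledPolytope n d) (b' : EuclideanSpace ℝ (Fin n)) : ℝ :=
  P.Z0 (1, b') ^ (n + 1) / P.W00 (1, b') ^ n

end LabeledPolytope


section Aux

open LabeledPolytope

/-- Recession direction of a bounded nonempty polytope must be zero. -/
lemma recession_zero {n d : ℕ} (P : LabeledPolytope n d)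
    (hc : IsCompact P.Delta) (hne : P.Delta.Nonempty)
    (z : EuclideanSpace ℝ (Fin n)) (hz : ∀ l, 0 ≤ ⟪P.u l, z⟫) : z = 0 := by
  by_contra hz0
  obtain ⟨μ₀, hμ₀⟩ := hne
  have hmem : ∀ t : ℝ, 0 ≤ t → μ₀ + t • z ∈ P.Delta := by
    intro t ht l
    have key : P.L l (μ₀ + t • z) = P.L l μ₀ + t * ⟪P.u l, z⟫ := by
      unfold LabeledPolytope.L
      rw [inner_add_right, real_inner_smul_right]
      ring
    rw [key]
    have h1 := hμ₀ l
    have h2 := mul_nonneg ht (hz l)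
    linarith
  obtain ⟨C, hC⟩ := hc.isBounded.subset_ball 0
  have hzpos : 0 < ‖z‖ := norm_pos_iff.mpr hz0
  have hCpos : 0 < C + ‖μ₀‖ + 1 := by
    have h := hC hμ₀
    simp only [Metric.mem_ball, dist_zero_right] at h
    have := norm_nonneg μ₀
    linarith
  set t : ℝ := (C + ‖μ₀‖ + 1) / ‖z‖ with ht
  have htpos : 0 ≤ t := le_of_lt (div_pos hCpos hzpos)
  have hin := hC (hmem t htpos)
  simp only [Metric.mem_ball, dist_zero_right] at hin
  have h1 : t * ‖z‖ = C + ‖μ₀‖ + 1 := div_mul_cancel₀ _ (ne_of_gt hzpos)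
  have h2 : ‖t • z‖ ≤ ‖μ₀‖ + ‖μ₀ + t • z‖ := by
    have h3 := norm_sub_le (μ₀ + t • z) μ₀
    have h4 : μ₀ + t • z - μ₀ = t • z := by abel
    rw [h4] at h3
    linarith
  rw [norm_smul, Real.norm_eq_abs, abs_of_nonneg htpos] at h2
  linarith

end Aux

open LabeledPolytope in
/-- For `b ∈ C*₊(Δ)`, the map `Ψ_b(μ) = (1,μ)/b(μ)` is injective on
`U = {μ : b(μ) > 0}`, its Fréchet derivative at every point of `U` is an injective
linear map `ℝⁿ → ℝ^{1+n}`, and `{y ∈ C(Δ) : ⟨y,b⟩ = 1} = Ψ_b(Δ)`. -/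
theorem stmt2 {n d : ℕ} (P : LabeledPolytope n d) (hP : P.IsLabeledPolytope)
    (b : ℝ × EuclideanSpace ℝ (Fin n)) (hb : b ∈ P.CstarPlus) :
    Set.InjOn (Psi b) {μ | 0 < bval b μ} ∧
      (∀ μ ∈ {μ : EuclideanSpace ℝ (Fin n) | 0 < bval b μ},
        ∃ D : EuclideanSpace ℝ (Fin n) →L[ℝ] ℝ × EuclideanSpace ℝ (Fin n),
          HasFDerivAt (Psi b) D μ ∧ Function.Injective D) ∧
      {y | y ∈ P.Cone ∧ pairing y b = 1} = Psi b '' P.Delta := by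
  obtain ⟨x₀, hx₀⟩ := hP.int_nonempty
  have hx₀Δ : x₀ ∈ P.Delta := interior_subset hx₀
  refine ⟨?_, ?_, ?_⟩
  · -- injectivity
    intro x hx y hy h
    simp only [Set.mem_setOf_eq] at hx hy
    have h1 : (bval b x)⁻¹ * 1 = (bval b y)⁻¹ * 1 := by
      have := congrArg Prod.fst h
      simpa [Psi, smul_eq_mul] using this
    have hbxy : bval b x = bval b y := by
      rw [mul_one, mul_one] at h1
      have := congrArg (·⁻¹) h1
      simpa using this
    have h2 : (bval b x)⁻¹ • x = (bval b y)⁻¹ • y := congrArg Prod.snd h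
    rw [← hbxy] at h2
    exact smul_right_injective _ (inv_ne_zero (ne_of_gt hx)) h2
  · -- derivative
    intro μ hμ
    simp only [Set.mem_setOf_eq] at hμ
    have hbx : bval b μ ≠ 0 := ne_of_gt hμ
    have h1 : HasFDerivAt (fun x => bval b x) (innerSL ℝ b.2) μ := by
      have h := ((innerSL ℝ b.2).hasFDerivAt (x := μ)).const_add b.1
      simpa [bval] using h
    have h2 : HasFDerivAt (fun x => (bval b x)⁻¹)
        ((-(bval b μ ^ 2)⁻¹ : ℝ) • innerSL ℝ b.2) μ :=
      (hasDerivAt_inv hbx).comp_hasFDerivAt μ h1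
    have h3 : HasFDerivAt (fun x : EuclideanSpace ℝ (Fin n) => ((1:ℝ), x))
        ((0 : EuclideanSpace ℝ (Fin n) →L[ℝ] ℝ).prod (ContinuousLinearMap.id ℝ _)) μ :=
      HasFDerivAt.prodMk (hasFDerivAt_const (1:ℝ) μ) (hasFDerivAt_id μ)
    refine ⟨(bval b μ)⁻¹ • ((0 : EuclideanSpace ℝ (Fin n) →L[ℝ] ℝ).prod
        (ContinuousLinearMap.id ℝ _)) +
        (((-(bval b μ ^ 2)⁻¹ : ℝ) • innerSL ℝ b.2)).smulRight ((1:ℝ), μ), ?_, ?_⟩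
    · exact h2.smul h3
    · intro v w hvw
      simp only [ContinuousLinearMap.add_apply, ContinuousLinearMap.smul_apply,
        ContinuousLinearMap.prod_apply, ContinuousLinearMap.zero_apply,
        ContinuousLinearMap.id_apply, ContinuousLinearMap.smulRight_apply,
        innerSL_apply_apply, Prod.smul_mk, Prod.mk_add_mk, Prod.mk.injEq, smul_zero,
        zero_add, smul_eq_mul] at hvw
      obtain ⟨hfst, hsnd⟩ := hvw
      have hA : ((-(bval b μ ^ 2)⁻¹ : ℝ) * ⟪b.2, v⟫)
          = ((-(bval b μ ^ 2)⁻¹ : ℝ) * ⟪b.2, w⟫) := by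
        simpa using hfst
      rw [hA] at hsnd
      have h4 : (bval b μ)⁻¹ • v = (bval b μ)⁻¹ • w := add_right_cancel hsnd
      exact smul_right_injective _ (inv_ne_zero hbx) h4
  · -- set equality
    ext y
    simp only [Set.mem_setOf_eq, Set.mem_image]
    constructor
    · rintro ⟨hyC, hyp⟩
      obtain ⟨y₀, y'⟩ := y
      have hpair : b.1 * y₀ + ⟪b.2, y'⟫ = 1 := hyp
      rcases lt_trichotomy y₀ 0 with hneg | hzero | hpos
      · -- y₀ < 0 : contradiction
        exfalso
        have hz : ∀ l, 0 ≤ ⟪P.u l, y' + (-y₀) • x₀⟫ := by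
          intro l
          have h1 : 0 ≤ P.lam l * y₀ + ⟪P.u l, y'⟫ := hyC l
          have h2 : 0 ≤ ⟪P.u l, x₀⟫ + P.lam l := hx₀Δ l
          rw [inner_add_right, real_inner_smul_right]
          nlinarith [mul_nonneg (by linarith : (0:ℝ) ≤ -y₀) h2]
        have hz0 := recession_zero P hP.compact ⟨x₀, hx₀Δ⟩ _ hz
        have hy' : y' = y₀ • x₀ := by
          have h5 := eq_neg_of_add_eq_zero_left hz0
          rw [h5, ← neg_smul, neg_neg]
        have hbx₀ : 0 < bval b x₀ := hb x₀ hx₀Δ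
        have hbe : bval b x₀ = b.1 + ⟪b.2, x₀⟫ := rfl
        rw [hy', real_inner_smul_right] at hpair
        nlinarith
      · -- y₀ = 0 : contradiction
        exfalso
        subst hzero
        have hz : ∀ l, 0 ≤ ⟪P.u l, y'⟫ := by
          intro l
          have h1 : 0 ≤ P.lam l * 0 + ⟪P.u l, y'⟫ := hyC l
          linarith
        have hz0 := recession_zero P hP.compact ⟨x₀, hx₀Δ⟩ _ hz
        rw [hz0, inner_zero_right] at hpair
        simp at hpair
      · -- y₀ > 0
        have hinv : 0 < y₀⁻¹ := inv_pos.mpr hpos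
        refine ⟨y₀⁻¹ • y', ?_, ?_⟩
        · intro l
          have h1 : 0 ≤ P.lam l * y₀ + ⟪P.u l, y'⟫ := hyC l
          show 0 ≤ ⟪P.u l, y₀⁻¹ • y'⟫ + P.lam l
          rw [real_inner_smul_right]
          have h2 : 0 ≤ y₀⁻¹ * (P.lam l * y₀ + ⟪P.u l, y'⟫) := mul_nonneg hinv.le h1
          have h3 : y₀⁻¹ * (P.lam l * y₀ + ⟪P.u l, y'⟫)
              = P.lam l * (y₀⁻¹ * y₀) + y₀⁻¹ * ⟪P.u l, y'⟫ := by ring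
          rw [h3, inv_mul_cancel₀ (ne_of_gt hpos), mul_one] at h2
          linarith
        · have hbv : bval b (y₀⁻¹ • y') = y₀⁻¹ := by
            show b.1 + ⟪b.2, y₀⁻¹ • y'⟫ = y₀⁻¹
            rw [real_inner_smul_right]
            have hA : ⟪b.2, y'⟫ = 1 - b.1 * y₀ := by linarith
            rw [hA, mul_sub, mul_one, mul_comm b.1 y₀, ← mul_assoc,
              inv_mul_cancel₀ (ne_of_gt hpos), one_mul]
            ring
          show (bval b (y₀⁻¹ • y'))⁻¹ • ((1:ℝ), y₀⁻¹ • y') = (y₀, y')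
          rw [hbv, inv_inv, Prod.smul_mk, smul_smul, smul_eq_mul, mul_one,
            mul_inv_cancel₀ (ne_of_gt hpos), one_smul]
    · rintro ⟨μ, hμ, rfl⟩
      have hbμ : 0 < bval b μ := hb μ hμ
      have hinv : 0 < (bval b μ)⁻¹ := inv_pos.mpr hbμ
      have hbe : bval b μ = b.1 + ⟪b.2, μ⟫ := rfl
      constructor
      · intro l
        have h1 : 0 ≤ ⟪P.u l, μ⟫ + P.lam l := hμ l
        show 0 ≤ P.lam l * ((bval b μ)⁻¹ • (1:ℝ)) + ⟪P.u l, (bval b μ)⁻¹ • μ⟫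
        rw [real_inner_smul_right, smul_eq_mul, mul_one]
        nlinarith [mul_nonneg hinv.le h1]
      · show b.1 * ((bval b μ)⁻¹ • (1:ℝ)) + ⟪b.2, (bval b μ)⁻¹ • μ⟫ = 1
        rw [real_inner_smul_right, smul_eq_mul, mul_one]
        rw [mul_comm b.1 ((bval b μ)⁻¹), ← mul_add, ← hbe]
        exact inv_mul_cancel₀ (ne_of_gt hbμ)
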